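/- arXiv:1801.02745 — 4 statements merged into one kernel-verified Lean document; each statement's English description precedes it below -/
import Mathlib

section
/- For every q ∈ (0,1) and every real x > 0, D_KL(Poi_x ‖ Y^(q)) = log S(q) − x·log q − x·E₁(x). -/
/-- `ψ(y) = −γ + Σ_{k=1}^{y−1} 1/k` for a positive integer `y`. -/
noncomputable def psi (y : ℕ) : ℝ :=
  -Real.eulerMascheroniConstant + ∑ k ∈ Finset.Icc 1 (y - 1), (1 : ℝ) / k

/-- `g(0) = 0` and `g(y) = y·ψ(y)` for `y ≥ 1`. -/
noncomputable def g (y : ℕ) : ℝ := y * psi y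

/-- The normalizing sum `S(q) = Σ_{y=0}^∞ e^{g(y)}·(q/e)^y / y!` of the digamma distribution. -/
noncomputable def S (q : ℝ) : ℝ :=
  ∑' y : ℕ, Real.exp (g y) * (q / Real.exp 1) ^ y / Nat.factorial y

/-- The pmf of the digamma distribution: `Y^(q)(y) = e^{g(y)}·(q/e)^y / (y!·S(q))`. -/
noncomputable def digammaPMF (q : ℝ) (y : ℕ) : ℝ :=
  Real.exp (g y) * (q / Real.exp 1) ^ y / (Nat.factorial y * S q)

/-- The pmf of the Poisson distribution with mean `l`. -/
noncomputable def poissonPMF (l : ℝ) (y : ℕ) : ℝ := Real.exp (-l) * l ^ y / Nat.factorial y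

/-- Kullback–Leibler divergence between distributions on ℕ:
`D_KL(P‖Q) = Σ_y P(y)·log(P(y)/Q(y))`. -/
noncomputable def klDivPMF (P Q : ℕ → ℝ) : ℝ := ∑' y : ℕ, P y * Real.log (P y / Q y)

/-- The exponential integral `E₁(x) = ∫_1^∞ e^{−xt}/t dt`. -/
noncomputable def E1 (x : ℝ) : ℝ := ∫ t in Set.Ioi (1 : ℝ), Real.exp (-(x * t)) / t

open Real MeasureTheory Set Filter Topology
open scoped ENNReal NNReal

noncomputable def Hsum (y : ℕ) : ℝ := ∑ k ∈ Finset.Icc 1 y, (1 : ℝ) / k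

lemma Hsum_zero : Hsum 0 = 0 := by simp [Hsum]

lemma psi_eq (y : ℕ) : psi y = -Real.eulerMascheroniConstant + Hsum (y - 1) := rfl

lemma Hsum_succ (y : ℕ) : Hsum (y + 1) = Hsum y + 1 / (y + 1) := by
  rw [Hsum, Hsum, Finset.sum_Icc_succ_top (by omega : 1 ≤ y + 1)]
  push_cast; ring

lemma Hsum_nonneg (y : ℕ) : 0 ≤ Hsum y := by
  unfold Hsum; positivity

lemma Hsum_le (y : ℕ) : Hsum y ≤ y := by
  induction y with
  | zero => simp [Hsum_zero]
  | succ n ih =>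
    rw [Hsum_succ]; push_cast
    have : (1 : ℝ) / (n + 1) ≤ 1 := by
      rw [div_le_one (by positivity)]; linarith [Nat.cast_nonneg (α := ℝ) n]
    linarith

lemma Hsum_eq_harmonic (y : ℕ) : Hsum y = (harmonic y : ℝ) := by
  rw [Hsum, harmonic]
  push_cast
  rw [Finset.range_eq_Ico, Finset.sum_Ico_eq_sum_range]
  rw [show Finset.Icc 1 y = Finset.Ico 1 (y+1) from rfl]
  rw [Finset.sum_Ico_eq_sum_range]
  simp [one_div, add_comm]

lemma Hsum_le_log (y : ℕ) :
    Hsum y ≤ Real.eulerMascheroniConstant + Real.log (y + 1) := by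
  have h := Real.eulerMascheroniSeq_lt_eulerMascheroniConstant y
  rw [Real.eulerMascheroniSeq] at h
  rw [Hsum_eq_harmonic]
  linarith

lemma exp_tsum (x : ℝ) : Real.exp x = ∑' n : ℕ, x ^ n / n.factorial := by
  rw [Real.exp_eq_exp_ℝ, NormedSpace.exp_eq_tsum_div]

lemma pow_div_factorial_le_exp (y : ℕ) : (y : ℝ) ^ y / y.factorial ≤ Real.exp y := by
  rw [exp_tsum]
  exact Summable.le_tsum (Real.summable_pow_div_factorial _) y
    (fun n _ => by positivity)

lemma g_zero : g 0 = 0 := by simp [g]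

lemma S_term_le {q : ℝ} (hq0 : 0 ≤ q) (y : ℕ) :
    Real.exp (g y) * (q / Real.exp 1) ^ y / Nat.factorial y ≤ q ^ y := by
  cases y with
  | zero => simp [g_zero]
  | succ n =>
    set y := n + 1
    have hy1 : (1 : ℝ) ≤ (y : ℝ) := by exact_mod_cast Nat.one_le_iff_ne_zero.2 (by omega)
    have hy0 : (0 : ℝ) < y := by linarith
    have hpsi : psi y ≤ Real.log y := by
      rw [psi_eq]
      have : (y : ℕ) - 1 = n := rfl
      rw [this]
      have := Hsum_le_log n
      have hcast : ((n : ℝ) + 1) = (y : ℝ) := by push_cast [y]; ring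
      rw [hcast] at this
      linarith
    have hg : g y ≤ y * Real.log y := by
      rw [g]
      exact mul_le_mul_of_nonneg_left hpsi (by positivity)
    have hexp : Real.exp (g y) ≤ (y : ℝ) ^ (y : ℕ) := by
      calc Real.exp (g y) ≤ Real.exp ((y : ℝ) * Real.log y) := Real.exp_le_exp.2 hg
        _ = (y : ℝ) ^ (y : ℕ) := by
            rw [← Real.exp_log hy0, ← Real.exp_nat_mul, Real.exp_log hy0, mul_comm]
    have hfac : (0 : ℝ) < y.factorial := by exact_mod_cast y.factorial_pos
    have key : (y : ℝ) ^ (y : ℕ) / y.factorial * (Real.exp 1)⁻¹ ^ (y : ℕ) ≤ 1 := by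
      have h1 : (y : ℝ) ^ (y : ℕ) / y.factorial ≤ Real.exp y := pow_div_factorial_le_exp y
      have h2 : (Real.exp 1)⁻¹ ^ (y : ℕ) = Real.exp (-(y : ℝ)) := by
        rw [← Real.exp_neg, ← Real.exp_nat_mul]; ring_nf
      rw [h2]
      calc (y:ℝ) ^ (y:ℕ) / y.factorial * Real.exp (-(y:ℝ))
          ≤ Real.exp y * Real.exp (-(y:ℝ)) := by
            apply mul_le_mul_of_nonneg_right h1 (Real.exp_nonneg _)
        _ = 1 := by rw [← Real.exp_add]; simp
    have expand : (q / Real.exp 1) ^ (y : ℕ) = q ^ (y:ℕ) * (Real.exp 1)⁻¹ ^ (y:ℕ) := by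
      rw [div_pow]; rw [div_eq_mul_inv, inv_pow]
    calc Real.exp (g y) * (q / Real.exp 1) ^ (y:ℕ) / Nat.factorial y
        ≤ (y : ℝ) ^ (y:ℕ) * (q ^ (y:ℕ) * (Real.exp 1)⁻¹ ^ (y:ℕ)) / Nat.factorial y := by
          apply div_le_div_of_nonneg_right ?_ hfac.le |>.trans_eq rfl
          rw [expand]
          apply mul_le_mul_of_nonneg_right hexp (by positivity)
      _ = q ^ (y:ℕ) * ((y : ℝ) ^ (y:ℕ) / y.factorial * (Real.exp 1)⁻¹ ^ (y:ℕ)) := by ring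
      _ ≤ q ^ (y:ℕ) * 1 := by
          apply mul_le_mul_of_nonneg_left key (by positivity)
      _ = q ^ (y:ℕ) := mul_one _

lemma S_summable {q : ℝ} (hq0 : 0 ≤ q) (hq1 : q < 1) :
    Summable (fun y : ℕ => Real.exp (g y) * (q / Real.exp 1) ^ y / Nat.factorial y) := by
  by_cases h : 0 ≤ q / Real.exp 1
  · exact Summable.of_nonneg_of_le (fun y => by positivity) (S_term_le hq0)
      (summable_geometric_of_lt_one hq0 hq1)
  · exact absurd (by positivity) h

lemma S_one_le {q : ℝ} (hq0 : 0 ≤ q) (hq1 : q < 1) : 1 ≤ S q := by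
  have := Summable.le_tsum (S_summable hq0 hq1) 0 (fun n _ => by positivity)
  simpa [g_zero, S] using this
lemma poissonPMF_pos {x : ℝ} (hx : 0 < x) (y : ℕ) : 0 < poissonPMF x y := by
  unfold poissonPMF
  have : (0:ℝ) < y.factorial := by exact_mod_cast y.factorial_pos
  positivity

lemma poissonPMF_summable (x : ℝ) : Summable (poissonPMF x) := by
  unfold poissonPMF
  simp_rw [mul_div_assoc]
  exact (Real.summable_pow_div_factorial x).mul_left _

lemma poissonPMF_tsum (x : ℝ) : ∑' y, poissonPMF x y = 1 := by
  unfold poissonPMF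
  simp_rw [mul_div_assoc]
  rw [tsum_mul_left, ← exp_tsum, ← Real.exp_add]
  simp

lemma tsum_shift {f : ℕ → ℝ} (c : ℕ → ℝ) (hc : Summable c) (h0 : f 0 = 0)
    (hs : ∀ y, f (y + 1) = c y) : Summable f ∧ ∑' y, f y = ∑' y, c y := by
  have hf : Summable f := by
    rw [← summable_nat_add_iff 1]
    simpa only [hs] using hc
  refine ⟨hf, ?_⟩
  rw [Summable.tsum_eq_zero_add hf, h0, zero_add]
  exact tsum_congr hs

lemma poisson_succ {x : ℝ} (hx : 0 < x) (y : ℕ) :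
    poissonPMF x (y + 1) * ((y : ℝ) + 1) = x * poissonPMF x y := by
  unfold poissonPMF
  rw [Nat.factorial_succ]
  have h1 : ((y:ℝ) + 1) ≠ 0 := by positivity
  have h2 : ((y.factorial : ℝ)) ≠ 0 := by exact_mod_cast y.factorial_pos.ne'
  push_cast
  field_simp
  ring

lemma mean_shift {x : ℝ} (hx : 0 < x) :
    Summable (fun y : ℕ => (y : ℝ) * poissonPMF x y) ∧
      ∑' y : ℕ, (y : ℝ) * poissonPMF x y = x := by
  have h := tsum_shift (f := fun y : ℕ => (y : ℝ) * poissonPMF x y)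
    (fun y => x * poissonPMF x y) ((poissonPMF_summable x).mul_left x)
    (by simp) (fun y => by push_cast; rw [mul_comm ((y:ℝ)+1), poisson_succ hx])
  refine ⟨h.1, ?_⟩
  rw [h.2, tsum_mul_left, poissonPMF_tsum, mul_one]

lemma summable_H_poisson {x : ℝ} (hx : 0 < x) :
    Summable (fun y : ℕ => poissonPMF x y * Hsum y) := by
  apply Summable.of_nonneg_of_le
    (fun y => mul_nonneg (poissonPMF_pos hx y).le (Hsum_nonneg y))
    (fun y => ?_) (mean_shift hx).1
  rw [mul_comm]
  exact mul_le_mul_of_nonneg_right (Hsum_le y) (poissonPMF_pos hx y).le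

lemma g_succ (y : ℕ) :
    g (y + 1) = ((y : ℝ) + 1) * (-Real.eulerMascheroniConstant + Hsum y) := by
  rw [g, psi_eq]
  push_cast
  rfl

lemma tsum_g_poisson {x : ℝ} (hx : 0 < x) :
    Summable (fun y : ℕ => poissonPMF x y * g y) ∧
      ∑' y : ℕ, poissonPMF x y * g y
        = x * (-Real.eulerMascheroniConstant) + x * ∑' y : ℕ, poissonPMF x y * Hsum y := by
  have hc : Summable (fun y : ℕ => x * (poissonPMF x y * (-Real.eulerMascheroniConstant) + poissonPMF x y * Hsum y)) := by
    apply Summable.mul_left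
    exact ((poissonPMF_summable x).mul_right _).add (summable_H_poisson hx)
  have h := tsum_shift (f := fun y : ℕ => poissonPMF x y * g y) _ hc
    (by simp [g_zero]) (fun y => ?_)
  · refine ⟨h.1, ?_⟩
    rw [h.2, tsum_mul_left, Summable.tsum_add ((poissonPMF_summable x).mul_right _) (summable_H_poisson hx),
      tsum_mul_right, poissonPMF_tsum, one_mul, mul_add]
  · show poissonPMF x (y+1) * g (y + 1) = _
    rw [g_succ, ← mul_assoc, poisson_succ hx]
    ring
lemma Hsum_eq_range (y : ℕ) : Hsum y = ∑ j ∈ Finset.range y, (1 : ℝ) / (j + 1) := by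
  rw [Hsum, show Finset.Icc 1 y = Finset.Ico 1 (y+1) from rfl, Finset.sum_Ico_eq_sum_range]
  simp [add_comm]

lemma geom_identity {u : ℝ} (hu : u ≠ 0) (y : ℕ) :
    (1 - (1 - u) ^ y) / u = ∑ j ∈ Finset.range y, (1 - u) ^ j := by
  have h := geom_sum_mul (1 - u) y
  have h2 : (∑ i ∈ Finset.range y, (1 - u) ^ i) * (-u) = (1 - u) ^ y - 1 := by
    rw [← h]; ring_nf
  field_simp
  linarith [h2]

lemma integral_one_sub_pow (j : ℕ) :
    ∫ u in Ioc (0:ℝ) 1, (1 - u) ^ j = 1 / (j + 1) := by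
  rw [← intervalIntegral.integral_of_le zero_le_one]
  have := intervalIntegral.integral_comp_sub_left (a := (0:ℝ)) (b := 1) (fun s => s ^ j) 1
  simp only [sub_zero, sub_self] at this
  rw [this, integral_pow]
  norm_num

lemma Hsum_integral (y : ℕ) :
    Hsum y = ∫ u in Ioc (0:ℝ) 1, (1 - (1 - u) ^ y) / u := by
  have hmeas : MeasurableSet (Ioc (0:ℝ) 1) := measurableSet_Ioc
  rw [Hsum_eq_range]
  have step1 : ∀ j ∈ Finset.range y, (1:ℝ)/(j+1) = ∫ u in Ioc (0:ℝ) 1, (1-u)^j :=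
    fun j _ => (integral_one_sub_pow j).symm
  rw [Finset.sum_congr rfl step1, ← integral_finset_sum _ (fun j _ => ?_)]
  · apply setIntegral_congr_fun hmeas
    intro u hu
    exact (geom_identity (ne_of_gt hu.1) y).symm
  · exact (Continuous.integrableOn_Ioc (by continuity))

lemma one_sub_pow_div_le {u : ℝ} (hu : u ∈ Ioc (0:ℝ) 1) (y : ℕ) :
    (1 - (1 - u) ^ y) / u ∈ Icc (0:ℝ) y := by
  rw [geom_identity (ne_of_gt hu.1) y]
  constructor
  · apply Finset.sum_nonneg
    intro j _
    have : (0:ℝ) ≤ 1 - u := by linarith [hu.2]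
    positivity
  · calc ∑ j ∈ Finset.range y, (1-u)^j ≤ ∑ j ∈ Finset.range y, 1 := by
          apply Finset.sum_le_sum
          intro j _
          have h0 : (0:ℝ) ≤ 1 - u := by linarith [hu.2]
          have h1 : (1:ℝ) - u ≤ 1 := by linarith [hu.1]
          exact pow_le_one₀ h0 h1
    _ = y := by simp

lemma tsum_poisson_geom {x : ℝ} (u : ℝ) :
    ∑' y : ℕ, poissonPMF x y * (1 - u) ^ y = Real.exp (-(x * u)) := by
  unfold poissonPMF
  have : ∀ y : ℕ, Real.exp (-x) * x ^ y / y.factorial * (1-u)^y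
      = Real.exp (-x) * ((x * (1-u))^y / y.factorial) := by
    intro y; rw [mul_pow]; ring
  rw [tsum_congr this, tsum_mul_left, ← exp_tsum, ← Real.exp_add]
  ring_nf

lemma summable_poisson_geom (x u : ℝ) :
    Summable (fun y : ℕ => poissonPMF x y * (1 - u) ^ y) := by
  unfold poissonPMF
  have : ∀ y : ℕ, Real.exp (-x) * x ^ y / y.factorial * (1-u)^y
      = Real.exp (-x) * ((x * (1-u))^y / y.factorial) := by
    intro y; rw [mul_pow]; ring
  simp_rw [this]
  exact (Real.summable_pow_div_factorial _).mul_left _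

lemma tsum_H_poisson_eq {x : ℝ} (hx : 0 < x) :
    ∑' y : ℕ, poissonPMF x y * Hsum y
      = ∫ u in Ioc (0:ℝ) 1, (1 - Real.exp (-(x * u))) / u := by
  have hmeas : MeasurableSet (Ioc (0:ℝ) 1) := measurableSet_Ioc
  set f : ℕ → ℝ → ℝ := fun y u => poissonPMF x y * ((1 - (1 - u) ^ y) / u) with hf
  have hfm : ∀ y : ℕ, AEStronglyMeasurable (f y) (volume.restrict (Ioc (0:ℝ) 1)) := by
    intro y
    apply Measurable.aestronglyMeasurable
    exact (((measurable_const.sub ((measurable_const.sub measurable_id).pow_const y)).div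
      measurable_id).const_mul _)
  have hbound : ∑' y : ℕ, ∫⁻ u, ‖f y u‖₊ ∂(volume.restrict (Ioc (0:ℝ) 1)) ≠ ⊤ := by
    have hle : ∀ y : ℕ, ∫⁻ u, ‖f y u‖₊ ∂(volume.restrict (Ioc (0:ℝ) 1))
        ≤ ENNReal.ofReal ((y : ℝ) * poissonPMF x y) := by
      intro y
      have hptwise : ∀ᵐ u ∂(volume.restrict (Ioc (0:ℝ) 1)),
          (‖f y u‖₊ : ℝ≥0∞) ≤ ENNReal.ofReal ((y : ℝ) * poissonPMF x y) := by
        rw [ae_restrict_iff' hmeas]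
        filter_upwards with u hu
        have hmem := one_sub_pow_div_le hu y
        rw [← enorm_eq_nnnorm, ← ofReal_norm]
        apply ENNReal.ofReal_le_ofReal
        rw [hf]
        simp only [Real.norm_eq_abs]
        rw [abs_of_nonneg (mul_nonneg (poissonPMF_pos hx y).le hmem.1)]
        rw [mul_comm ((y:ℝ))]
        exact mul_le_mul_of_nonneg_left hmem.2 (poissonPMF_pos hx y).le
      calc ∫⁻ u, ‖f y u‖₊ ∂(volume.restrict (Ioc (0:ℝ) 1))
          ≤ ∫⁻ _, ENNReal.ofReal ((y : ℝ) * poissonPMF x y) ∂(volume.restrict (Ioc (0:ℝ) 1)) :=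
            lintegral_mono_ae hptwise
        _ = ENNReal.ofReal ((y : ℝ) * poissonPMF x y) := by
            rw [lintegral_const, Measure.restrict_apply_univ, Real.volume_Ioc]
            norm_num
    have hsum2 : ∑' y : ℕ, ENNReal.ofReal ((y : ℝ) * poissonPMF x y) ≠ ⊤ := by
      rw [← ENNReal.ofReal_tsum_of_nonneg
        (fun y => mul_nonneg (Nat.cast_nonneg y) (poissonPMF_pos hx y).le) (mean_shift hx).1]
      exact ENNReal.ofReal_ne_top
    exact ne_top_of_le_ne_top hsum2 (ENNReal.tsum_le_tsum hle)
  have key : ∀ y : ℕ, poissonPMF x y * Hsum y = ∫ u in Ioc (0:ℝ) 1, f y u := by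
    intro y
    rw [hf]
    simp only
    rw [MeasureTheory.integral_const_mul, ← Hsum_integral]
  rw [tsum_congr key, ← integral_tsum hfm hbound]
  apply setIntegral_congr_fun hmeas
  intro u hu
  have hu0 : u ≠ 0 := ne_of_gt hu.1
  have hterm : ∀ y : ℕ, f y u = (poissonPMF x y - poissonPMF x y * (1-u)^y) / u := by
    intro y; rw [hf]; field_simp
  simp only [hterm]
  rw [tsum_div_const, Summable.tsum_sub (poissonPMF_summable x) (summable_poisson_geom x u),
    poissonPMF_tsum, tsum_poisson_geom]
lemma integrableOn_log_Ioc : IntegrableOn Real.log (Ioc (0:ℝ) 1) := by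
  have hb : IntegrableOn (fun t : ℝ => 2 * t ^ (-(1:ℝ)/2)) (Ioc (0:ℝ) 1) := by
    have h := intervalIntegral.intervalIntegrable_rpow' (a := (0:ℝ)) (b := 1)
      (by norm_num : (-1:ℝ) < -(1:ℝ)/2)
    rw [intervalIntegrable_iff_integrableOn_Ioc_of_le zero_le_one] at h
    exact h.const_mul 2
  refine Integrable.mono' (hb.norm) (Measurable.aestronglyMeasurable Real.measurable_log) ?_
  rw [ae_restrict_iff' measurableSet_Ioc]
  filter_upwards with t ht
  have ht0 : (0:ℝ) < t := ht.1
  have hrpow : (0:ℝ) < t ^ (-(1:ℝ)/2) := Real.rpow_pos_of_pos ht0 _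
  have hlogle : Real.log t ≤ 0 := Real.log_nonpos ht0.le ht.2
  have h1 : -Real.log t = 2 * Real.log (t ^ (-(1:ℝ)/2)) := by
    rw [Real.log_rpow ht0]; ring
  have h2 : Real.log (t ^ (-(1:ℝ)/2)) ≤ t ^ (-(1:ℝ)/2) := by
    linarith [Real.log_le_sub_one_of_pos hrpow]
  rw [Real.norm_eq_abs, abs_of_nonpos hlogle, Real.norm_eq_abs, abs_of_nonneg (by positivity)]
  linarith

lemma t_le_two_exp_half (t : ℝ) : t ≤ 2 * Real.exp ((1/2) * t) := by
  have := Real.add_one_le_exp ((1/2) * t)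
  linarith

lemma integrableOn_exp_log_Ioi : IntegrableOn (fun t => Real.exp (-t) * Real.log t) (Ioi (1:ℝ)) := by
  have hb : Integrable (fun t : ℝ => 2 * Real.exp (-((1/2) * t)))
      (volume.restrict (Ioi (1:ℝ))) := by
    have := exp_neg_integrableOn_Ioi (1:ℝ) (by norm_num : (0:ℝ) < 1/2)
    simpa [neg_mul] using this.const_mul 2
  refine Integrable.mono' hb
    (Measurable.aestronglyMeasurable (((measurable_neg).exp).mul Real.measurable_log)) ?_
  rw [ae_restrict_iff' measurableSet_Ioi]
  filter_upwards with t ht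
  rw [mem_Ioi] at ht
  have ht0 : (0:ℝ) < t := by linarith
  have hlog0 : 0 ≤ Real.log t := Real.log_nonneg (by linarith)
  have hlogle : Real.log t ≤ t := by linarith [Real.log_le_sub_one_of_pos ht0]
  rw [Real.norm_eq_abs, abs_of_nonneg (mul_nonneg (Real.exp_nonneg _) hlog0)]
  have hkey : Real.exp (-t) * Real.exp ((1/2) * t) = Real.exp (-((1/2)*t)) := by
    rw [← Real.exp_add]; ring_nf
  calc Real.exp (-t) * Real.log t ≤ Real.exp (-t) * t :=
        mul_le_mul_of_nonneg_left hlogle (Real.exp_nonneg _)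
    _ ≤ Real.exp (-t) * (2 * Real.exp ((1/2) * t)) :=
        mul_le_mul_of_nonneg_left (t_le_two_exp_half t) (Real.exp_nonneg _)
    _ = 2 * (Real.exp (-t) * Real.exp ((1/2) * t)) := by ring
    _ = 2 * Real.exp (-((1/2)*t)) := by rw [hkey]

lemma integrableOn_exp_div_Ioi {x : ℝ} (hx : 0 < x) :
    IntegrableOn (fun s => Real.exp (-s) / s) (Ioi x) := by
  have hb0 : IntegrableOn (fun t : ℝ => Real.exp (-1 * t)) (Ioi x) :=
    exp_neg_integrableOn_Ioi x one_pos
  have hb : Integrable (fun t : ℝ => x⁻¹ * Real.exp (-1 * t))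
      (volume.restrict (Ioi x)) := hb0.const_mul x⁻¹
  refine Integrable.mono' hb
    (Measurable.aestronglyMeasurable ((measurable_neg.exp).div measurable_id)) ?_
  rw [ae_restrict_iff' measurableSet_Ioi]
  filter_upwards with t ht
  rw [mem_Ioi] at ht
  have ht0 : (0:ℝ) < t := lt_trans hx ht
  simp only [id, neg_one_mul]
  rw [Real.norm_eq_abs, abs_of_nonneg (by positivity)]
  rw [div_le_iff₀ ht0]
  calc Real.exp (-t) ≤ Real.exp (-t) * (t * x⁻¹) := by
        nth_rewrite 1 [← mul_one (Real.exp (-t))]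
        apply mul_le_mul_of_nonneg_left ?_ (Real.exp_nonneg _)
        rw [← div_eq_mul_inv, le_div_iff₀ hx, one_mul]
        exact ht.le
    _ = x⁻¹ * Real.exp (-t) * t := by ring

lemma one_sub_exp_div_mem {s : ℝ} (hs : 0 < s) : (1 - Real.exp (-s)) / s ∈ Icc (0:ℝ) 1 := by
  have h1 : 1 - s ≤ Real.exp (-s) := by linarith [Real.add_one_le_exp (-s)]
  have h2 : Real.exp (-s) ≤ 1 := Real.exp_le_one_iff.2 (by linarith)
  constructor
  · exact div_nonneg (by linarith) hs.le
  · rw [div_le_one hs]; linarith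

lemma integrableOn_one_sub_exp_div {M : ℝ} :
    IntegrableOn (fun s => (1 - Real.exp (-s)) / s) (Ioc (0:ℝ) M) := by
  apply Measure.integrableOn_of_bounded (M := 1)
    (by rw [Real.volume_Ioc]; exact ENNReal.ofReal_ne_top)
    (Measurable.aestronglyMeasurable ((measurable_const.sub measurable_neg.exp).div measurable_id))
  · rw [ae_restrict_iff' measurableSet_Ioc]
    filter_upwards with s hs
    have := one_sub_exp_div_mem hs.1
    simp only [Pi.sub_apply, Pi.div_apply, id]
    rw [Real.norm_eq_abs, abs_of_nonneg this.1]
    exact this.2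

lemma gamma_integral_eq : ∫ t in Ioi (0:ℝ), Real.log t * Real.exp (-t)
    = -Real.eulerMascheroniConstant := by
  have h1 : HasDerivAt Complex.GammaIntegral
      (∫ t : ℝ in Ioi 0, (t:ℂ) ^ ((1:ℂ) - 1) * (Real.log t * Real.exp (-t))) 1 :=
    Complex.hasDerivAt_GammaIntegral (by norm_num)
  have hval : (∫ t : ℝ in Ioi 0, (t:ℂ) ^ ((1:ℂ) - 1) * (Real.log t * Real.exp (-t)))
      = ((∫ t in Ioi (0:ℝ), Real.log t * Real.exp (-t) : ℝ) : ℂ) := by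
    rw [show ((∫ t in Ioi (0:ℝ), Real.log t * Real.exp (-t) : ℝ) : ℂ)
        = ∫ t in Ioi (0:ℝ), ((Real.log t * Real.exp (-t) : ℝ) : ℂ) from
      (integral_ofReal).symm]
    apply setIntegral_congr_fun measurableSet_Ioi
    intro t ht
    simp [Complex.cpow_zero, Complex.ofReal_mul]
  rw [hval] at h1
  have h2 : HasDerivAt (fun x : ℝ => (Complex.GammaIntegral x).re)
      (∫ t in Ioi (0:ℝ), Real.log t * Real.exp (-t)) 1 := by
    simpa using h1.real_of_complex
  have h3 : HasDerivAt Real.Gamma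
      (∫ t in Ioi (0:ℝ), Real.log t * Real.exp (-t)) 1 := by
    apply h2.congr_of_eventuallyEq
    filter_upwards [Ioi_mem_nhds one_pos] with x hx
    rw [← Complex.Gamma_eq_integral (by simpa using hx), Complex.Gamma_ofReal,
      Complex.ofReal_re]
  exact h3.unique Real.hasDerivAt_Gamma_one
lemma hasDerivAt_exp_neg (t : ℝ) : HasDerivAt (fun s : ℝ => Real.exp (-s)) (-Real.exp (-t)) t := by
  have h := (Real.hasDerivAt_exp (-t)).comp t (hasDerivAt_neg t)
  simp at h
  exact h

lemma integral_exp_log_Ioi_eq :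
    ∫ t in Ioi (1:ℝ), Real.exp (-t) * Real.log t = ∫ t in Ioi (1:ℝ), Real.exp (-t) / t := by
  set f : ℝ → ℝ := fun t => -(Real.exp (-t) * Real.log t) with hf
  set f' : ℝ → ℝ := fun t => Real.exp (-t) * Real.log t - Real.exp (-t) / t with hf'
  have hderiv : ∀ t ∈ Ioi (1:ℝ), HasDerivAt f (f' t) t := by
    intro t ht
    rw [mem_Ioi] at ht
    have ht0 : t ≠ 0 := by linarith
    have h1 := (hasDerivAt_exp_neg t).mul (Real.hasDerivAt_log ht0)
    have := h1.neg
    refine this.congr_deriv ?_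
    rw [hf']
    field_simp
    ring
  have htend : Tendsto f atTop (𝓝 0) := by
    rw [show (0:ℝ) = -0 by norm_num]
    apply Tendsto.neg
    apply squeeze_zero_norm' ?_ (Real.tendsto_pow_mul_exp_neg_atTop_nhds_zero 1)
    filter_upwards [eventually_ge_atTop (1:ℝ)] with t ht
    have ht0 : (0:ℝ) < t := by linarith
    rw [Real.norm_eq_abs, abs_of_nonneg (mul_nonneg (Real.exp_nonneg _)
      (Real.log_nonneg ht))]
    have hlogle : Real.log t ≤ t := by linarith [Real.log_le_sub_one_of_pos ht0]
    calc Real.exp (-t) * Real.log t ≤ Real.exp (-t) * t :=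
          mul_le_mul_of_nonneg_left hlogle (Real.exp_nonneg _)
      _ = t ^ 1 * Real.exp (-t) := by ring
  have hint : IntegrableOn f' (Ioi (1:ℝ)) :=
    integrableOn_exp_log_Ioi.sub (integrableOn_exp_div_Ioi one_pos)
  have hcont : ContinuousWithinAt f (Ici (1:ℝ)) 1 :=
    ((((hasDerivAt_exp_neg 1).continuousAt).mul
      (Real.continuousAt_log one_ne_zero)).neg).continuousWithinAt
  have h0 := integral_Ioi_of_hasDerivAt_of_tendsto hcont hderiv hint htend
  have hf1 : f 1 = 0 := by simp [hf]
  rw [hf1, sub_zero] at h0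
  have hsub : ∫ t in Ioi (1:ℝ), f' t
      = (∫ t in Ioi (1:ℝ), Real.exp (-t) * Real.log t) - ∫ t in Ioi (1:ℝ), Real.exp (-t) / t :=
    integral_sub integrableOn_exp_log_Ioi (integrableOn_exp_div_Ioi one_pos)
  rw [hsub] at h0
  linarith

lemma integral_log_exp_Ioc_eq :
    ∫ t in Ioc (0:ℝ) 1, Real.exp (-t) * Real.log t
      = -∫ t in Ioc (0:ℝ) 1, (1 - Real.exp (-t)) / t := by
  set F : ℝ → ℝ := fun t => (1 - Real.exp (-t)) * Real.log t with hF
  set f' : ℝ → ℝ := fun t => Real.exp (-t) * Real.log t + (1 - Real.exp (-t)) / t with hf'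
  have hcont : ContinuousOn F (Icc (0:ℝ) 1) := by
    intro t ht
    rcases eq_or_lt_of_le ht.1 with h0 | h0
    · -- t = 0
      subst h0
      have hF0 : F 0 = 0 := by simp [hF]
      have hbound : ∀ᶠ s in 𝓝[Icc (0:ℝ) 1] 0, ‖F s‖ ≤ ‖s * Real.log s‖ := by
        filter_upwards [self_mem_nhdsWithin] with s hs
        have hs0 : (0:ℝ) ≤ s := hs.1
        have h1 : 0 ≤ 1 - Real.exp (-s) := by
          have : Real.exp (-s) ≤ 1 := Real.exp_le_one_iff.2 (by linarith)
          linarith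
        have h2 : 1 - Real.exp (-s) ≤ s := by linarith [Real.add_one_le_exp (-s)]
        show |(1 - Real.exp (-s)) * Real.log s| ≤ |s * Real.log s|
        rw [abs_mul, abs_mul]
        refine mul_le_mul_of_nonneg_right ?_ (abs_nonneg _)
        rw [abs_of_nonneg h1, abs_of_nonneg hs0]
        exact h2
      have hg : Tendsto (fun s : ℝ => ‖s * Real.log s‖) (𝓝[Icc (0:ℝ) 1] 0) (𝓝 0) := by
        have := ((Real.continuous_mul_log.tendsto 0).mono_left
          (nhdsWithin_le_nhds (s := Icc (0:ℝ) 1))).norm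
        simpa using this
      have hT : Tendsto F (𝓝[Icc (0:ℝ) 1] 0) (𝓝 0) := squeeze_zero_norm' hbound hg
      unfold ContinuousWithinAt
      rw [hF0]
      exact hT
    · -- t > 0
      apply ContinuousAt.continuousWithinAt
      exact (((continuous_const.sub
        (Real.continuous_exp.comp continuous_neg)).continuousAt (x := t))).mul
        (Real.continuousAt_log (ne_of_gt h0))
  have hderiv : ∀ t ∈ Ioo (0:ℝ) 1, HasDerivWithinAt F (f' t) (Ioi t) t := by
    intro t ht
    have ht0 : t ≠ 0 := ne_of_gt ht.1
    have h1 : HasDerivAt (fun s : ℝ => 1 - Real.exp (-s)) (Real.exp (-t)) t := by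
      simpa using (hasDerivAt_exp_neg t).const_sub 1
    have h2 := h1.mul (Real.hasDerivAt_log ht0)
    apply HasDerivAt.hasDerivWithinAt
    exact h2
  have hii : IntervalIntegrable f' volume 0 1 := by
    rw [intervalIntegrable_iff_integrableOn_Ioc_of_le zero_le_one]
    refine Integrable.add ?_ integrableOn_one_sub_exp_div
    refine Integrable.mono' integrableOn_log_Ioc.norm
      (Measurable.aestronglyMeasurable (measurable_neg.exp.mul Real.measurable_log)) ?_
    rw [ae_restrict_iff' measurableSet_Ioc]
    filter_upwards with t ht
    rw [Real.norm_eq_abs, abs_mul, Real.norm_eq_abs]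
    have : |Real.exp (-t)| ≤ 1 := by
      rw [abs_of_nonneg (Real.exp_nonneg _)]
      exact Real.exp_le_one_iff.2 (by linarith [ht.1])
    calc |Real.exp (-t)| * |Real.log t| ≤ 1 * |Real.log t| :=
          mul_le_mul_of_nonneg_right this (abs_nonneg _)
      _ = |Real.log t| := one_mul _
  have h0 := intervalIntegral.integral_eq_sub_of_hasDeriv_right_of_le zero_le_one hcont hderiv hii
  have hF1 : F 1 = 0 := by simp [hF]
  have hF0 : F 0 = 0 := by simp [hF]
  rw [hF1, hF0, sub_zero, intervalIntegral.integral_of_le zero_le_one] at h0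
  have hsplit : ∫ t in Ioc (0:ℝ) 1, f' t
      = (∫ t in Ioc (0:ℝ) 1, Real.exp (-t) * Real.log t)
        + ∫ t in Ioc (0:ℝ) 1, (1 - Real.exp (-t)) / t := by
    apply integral_add ?_ integrableOn_one_sub_exp_div
    refine Integrable.mono' integrableOn_log_Ioc.norm
      (Measurable.aestronglyMeasurable (measurable_neg.exp.mul Real.measurable_log)) ?_
    rw [ae_restrict_iff' measurableSet_Ioc]
    filter_upwards with t ht
    rw [Real.norm_eq_abs, abs_mul, Real.norm_eq_abs]
    have : |Real.exp (-t)| ≤ 1 := by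
      rw [abs_of_nonneg (Real.exp_nonneg _)]
      exact Real.exp_le_one_iff.2 (by linarith [ht.1])
    calc |Real.exp (-t)| * |Real.log t| ≤ 1 * |Real.log t| :=
          mul_le_mul_of_nonneg_right this (abs_nonneg _)
      _ = |Real.log t| := one_mul _
  rw [hsplit] at h0
  linarith

lemma gamma_eq_ints : Real.eulerMascheroniConstant
    = (∫ s in Ioc (0:ℝ) 1, (1 - Real.exp (-s)) / s) - ∫ s in Ioi (1:ℝ), Real.exp (-s) / s := by
  have hsplit : ∫ t in Ioi (0:ℝ), Real.exp (-t) * Real.log t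
      = (∫ t in Ioc (0:ℝ) 1, Real.exp (-t) * Real.log t)
        + ∫ t in Ioi (1:ℝ), Real.exp (-t) * Real.log t := by
    rw [← setIntegral_union (Ioc_disjoint_Ioi le_rfl) measurableSet_Ioi ?_ integrableOn_exp_log_Ioi,
      Ioc_union_Ioi_eq_Ioi zero_le_one]
    · refine Integrable.mono' integrableOn_log_Ioc.norm
        (Measurable.aestronglyMeasurable (measurable_neg.exp.mul Real.measurable_log)) ?_
      rw [ae_restrict_iff' measurableSet_Ioc]
      filter_upwards with t ht
      rw [Real.norm_eq_abs, abs_mul, Real.norm_eq_abs]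
      have : |Real.exp (-t)| ≤ 1 := by
        rw [abs_of_nonneg (Real.exp_nonneg _)]
        exact Real.exp_le_one_iff.2 (by linarith [ht.1])
      calc |Real.exp (-t)| * |Real.log t| ≤ 1 * |Real.log t| :=
            mul_le_mul_of_nonneg_right this (abs_nonneg _)
        _ = |Real.log t| := one_mul _
  have hg : ∫ t in Ioi (0:ℝ), Real.exp (-t) * Real.log t = -Real.eulerMascheroniConstant := by
    rw [← gamma_integral_eq]
    apply setIntegral_congr_fun measurableSet_Ioi
    intro t _
    ring
  rw [hg, integral_log_exp_Ioc_eq, integral_exp_log_Ioi_eq] at hsplit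
  linarith
lemma sub_Ioc {x : ℝ} (hx : 0 < x) :
    ∫ u in Ioc (0:ℝ) 1, (1 - Real.exp (-(x*u))) / u
      = ∫ s in Ioc (0:ℝ) x, (1 - Real.exp (-s)) / s := by
  set f : ℝ → ℝ := fun s => (1 - Real.exp (-s)) / s with hfdef
  have hpt : ∀ u : ℝ, (1 - Real.exp (-(x*u))) / u = x * f (x * u) := by
    intro u
    rcases eq_or_ne u 0 with rfl | hu
    · simp [hfdef]
    · rw [hfdef]
      simp only
      field_simp
  rw [← intervalIntegral.integral_of_le zero_le_one, ← intervalIntegral.integral_of_le hx.le]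
  calc ∫ u in (0:ℝ)..1, (1 - Real.exp (-(x*u))) / u
      = ∫ u in (0:ℝ)..1, x * f (x * u) := by
        apply intervalIntegral.integral_congr
        intro u _
        exact hpt u
    _ = x * ∫ u in (0:ℝ)..1, f (x * u) := intervalIntegral.integral_const_mul x _
    _ = x * (x⁻¹ • ∫ s in (x*0:ℝ)..(x*1), f s) := by
        rw [intervalIntegral.integral_comp_mul_left f hx.ne']
    _ = ∫ s in (0:ℝ)..x, f s := by
        rw [smul_eq_mul, mul_zero, mul_one, ← mul_assoc, mul_inv_cancel₀ hx.ne', one_mul]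

lemma sub_Ioi {x : ℝ} (hx : 0 < x) :
    ∫ t in Ioi (1:ℝ), Real.exp (-(x*t)) / t = ∫ s in Ioi x, Real.exp (-s) / s := by
  set f : ℝ → ℝ := fun s => Real.exp (-s) / s with hfdef
  have key := integral_comp_mul_left_Ioi f 1 hx
  calc ∫ t in Ioi (1:ℝ), Real.exp (-(x*t)) / t
      = ∫ t in Ioi (1:ℝ), x * f (x * t) := by
        apply setIntegral_congr_fun measurableSet_Ioi
        intro t ht
        rw [mem_Ioi] at ht
        have ht0 : t ≠ 0 := by intro h; rw [h] at ht; linarith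
        rw [hfdef]
        simp only
        field_simp
    _ = x * ∫ t in Ioi (1:ℝ), f (x * t) := by rw [integral_const_mul]
    _ = x * (x⁻¹ • ∫ s in Ioi (x*1), f s) := by rw [key]
    _ = ∫ s in Ioi x, f s := by
        rw [smul_eq_mul, mul_one, ← mul_assoc, mul_inv_cancel₀ hx.ne', one_mul]

lemma intervalIntegrable_one_sub_exp_div {a b : ℝ} (ha : 0 ≤ a) (hb : 0 ≤ b) :
    IntervalIntegrable (fun s => (1 - Real.exp (-s)) / s) volume a b := by
  rcases le_total a b with hab | hab
  · rw [intervalIntegrable_iff_integrableOn_Ioc_of_le hab]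
    exact integrableOn_one_sub_exp_div.mono_set (Ioc_subset_Ioc_left ha)
  · apply IntervalIntegrable.symm
    rw [intervalIntegrable_iff_integrableOn_Ioc_of_le hab]
    exact integrableOn_one_sub_exp_div.mono_set (Ioc_subset_Ioc_left hb)

lemma Phi_split {x : ℝ} (hx : 0 < x) :
    ∫ s in Ioc (0:ℝ) x, (1 - Real.exp (-s)) / s
      = (∫ s in Ioc (0:ℝ) 1, (1 - Real.exp (-s)) / s)
        + ∫ s in (1:ℝ)..x, (1 - Real.exp (-s)) / s := by
  have h1 : IntervalIntegrable (fun s => (1 - Real.exp (-s)) / s) volume 0 1 :=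
    intervalIntegrable_one_sub_exp_div le_rfl zero_le_one
  have h2 : IntervalIntegrable (fun s => (1 - Real.exp (-s)) / s) volume 1 x :=
    intervalIntegrable_one_sub_exp_div zero_le_one hx.le
  rw [← intervalIntegral.integral_of_le hx.le, ← intervalIntegral.integral_of_le zero_le_one,
    ← intervalIntegral.integral_add_adjacent_intervals h1 h2]

lemma E_split {a b : ℝ} (ha : 0 < a) (hb : 0 < b) :
    ∫ s in Ioi a, Real.exp (-s) / s
      = (∫ s in (a:ℝ)..b, Real.exp (-s) / s) + ∫ s in Ioi b, Real.exp (-s) / s := by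
  have key : ∀ u v : ℝ, 0 < u → u ≤ v →
      ∫ s in Ioi u, Real.exp (-s) / s
        = (∫ s in Ioc u v, Real.exp (-s) / s) + ∫ s in Ioi v, Real.exp (-s) / s := by
    intro u v hu huv
    rw [← setIntegral_union (Ioc_disjoint_Ioi le_rfl) measurableSet_Ioi
      ((integrableOn_exp_div_Ioi hu).mono_set Ioc_subset_Ioi_self)
      (integrableOn_exp_div_Ioi (lt_of_lt_of_le hu huv)),
      Ioc_union_Ioi_eq_Ioi huv]
  rcases le_total a b with hab | hab
  · rw [key a b ha hab, intervalIntegral.integral_of_le hab]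
  · have := key b a hb hab
    rw [intervalIntegral.integral_symm, intervalIntegral.integral_of_le hab]
    linarith

lemma interval_decomp {x : ℝ} (hx : 0 < x) :
    ∫ s in (1:ℝ)..x, (1 - Real.exp (-s)) / s
      = Real.log x - ∫ s in (1:ℝ)..x, Real.exp (-s) / s := by
  have hsub : ∀ s ∈ uIcc (1:ℝ) x, (1 - Real.exp (-s)) / s = 1/s - Real.exp (-s) / s := by
    intro s _
    rw [sub_div]
  have hne : (0:ℝ) ∉ uIcc (1:ℝ) x := by
    rw [mem_uIcc]
    push_neg
    constructor
    · intro h; linarith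
    · intro h; linarith
  have hc1 : IntervalIntegrable (fun s : ℝ => 1/s) volume 1 x := by
    apply ContinuousOn.intervalIntegrable
    apply ContinuousOn.div continuousOn_const continuousOn_id
    intro s hs
    rintro rfl
    exact hne hs
  have hc2 : IntervalIntegrable (fun s : ℝ => Real.exp (-s) / s) volume 1 x := by
    apply ContinuousOn.intervalIntegrable
    apply ContinuousOn.div (Real.continuous_exp.comp continuous_neg).continuousOn
      continuousOn_id
    intro s hs
    rintro rfl
    exact hne hs
  rw [intervalIntegral.integral_congr hsub, intervalIntegral.integral_sub hc1 hc2,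
    integral_one_div hne, div_one]

lemma lemmaB {x : ℝ} (hx : 0 < x) :
    ∫ u in Ioc (0:ℝ) 1, (1 - Real.exp (-(x*u))) / u
      = Real.log x + Real.eulerMascheroniConstant + ∫ t in Ioi (1:ℝ), Real.exp (-(x*t)) / t := by
  rw [sub_Ioc hx, sub_Ioi hx, Phi_split hx, interval_decomp hx]
  have hE := E_split hx one_pos (a := x) (b := 1)
  have hE2 : (∫ s in (x:ℝ)..1, Real.exp (-s) / s) = -∫ s in (1:ℝ)..x, Real.exp (-s) / s :=
    intervalIntegral.integral_symm 1 x
  have hg := gamma_eq_ints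
  linarith

/-- For every `q ∈ (0,1)` and every `x > 0`,
`D_KL(Poi_x ‖ Y^(q)) = log S(q) − x·log q − x·E₁(x)`. -/
theorem stmt1 (q x : ℝ) (hq : q ∈ Set.Ioo (0 : ℝ) 1) (hx : 0 < x) :
    klDivPMF (poissonPMF x) (digammaPMF q)
      = Real.log (S q) - x * Real.log q - x * E1 x := by
  obtain ⟨hq0, hq1⟩ := hq
  have hS : (0:ℝ) < S q := lt_of_lt_of_le one_pos (S_one_le hq0.le hq1)
  have hqe : (0:ℝ) < q / Real.exp 1 := div_pos hq0 (Real.exp_pos 1)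
  have hlog : ∀ y : ℕ, Real.log (poissonPMF x y / digammaPMF q y)
      = Real.log (S q) - x + y * (Real.log x - Real.log q + 1) - g y := by
    intro y
    have hfac : (0:ℝ) < (y.factorial : ℝ) := by exact_mod_cast y.factorial_pos
    have hratio : poissonPMF x y / digammaPMF q y
        = Real.exp (-x) * x ^ y * (S q / (Real.exp (g y) * (q / Real.exp 1) ^ y)) := by
      unfold poissonPMF digammaPMF
      have h2 : Real.exp (g y) ≠ 0 := (Real.exp_pos _).ne'
      have h3 : (q / Real.exp 1) ^ y ≠ 0 := (pow_pos hqe y).ne'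
      field_simp
    rw [hratio]
    have hx1 : Real.exp (-x) * x ^ y ≠ 0 := by positivity
    have hx2 : S q / (Real.exp (g y) * (q / Real.exp 1) ^ y) ≠ 0 := by positivity
    rw [Real.log_mul hx1 hx2, Real.log_mul (Real.exp_ne_zero _) (by positivity),
      Real.log_exp, Real.log_pow, Real.log_div hS.ne' (by positivity),
      Real.log_mul (Real.exp_pos _).ne' (pow_pos hqe y).ne', Real.log_exp,
      Real.log_pow, Real.log_div hq0.ne' (Real.exp_pos 1).ne', Real.log_exp]
    push_cast
    ring
  have s1 : Summable (poissonPMF x) := poissonPMF_summable x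
  have s2 : Summable (fun y : ℕ => (y:ℝ) * poissonPMF x y) := (mean_shift hx).1
  have s3 : Summable (fun y : ℕ => poissonPMF x y * g y) := (tsum_g_poisson hx).1
  have hterm : ∀ y : ℕ, poissonPMF x y * Real.log (poissonPMF x y / digammaPMF q y)
      = ((Real.log (S q) - x) * poissonPMF x y
        + (Real.log x - Real.log q + 1) * ((y:ℝ) * poissonPMF x y))
        - poissonPMF x y * g y := by
    intro y
    rw [hlog y]
    ring
  have hA : ∑' y : ℕ, poissonPMF x y * Hsum y
      = Real.log x + Real.eulerMascheroniConstant + E1 x := by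
    rw [tsum_H_poisson_eq hx, lemmaB hx]
    rfl
  have hkl : klDivPMF (poissonPMF x) (digammaPMF q)
      = ((Real.log (S q) - x) * 1 + (Real.log x - Real.log q + 1) * x)
        - (x * (-Real.eulerMascheroniConstant) + x * (Real.log x + Real.eulerMascheroniConstant + E1 x)) := by
    unfold klDivPMF
    rw [tsum_congr hterm,
      Summable.tsum_sub ((s1.mul_left _).add (s2.mul_left _)) s3,
      Summable.tsum_add (s1.mul_left _) (s2.mul_left _),
      tsum_mul_left, tsum_mul_left, poissonPMF_tsum, (mean_shift hx).2,
      (tsum_g_poisson hx).2, hA]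
  rw [hkl]
  ring
end

section
/- For every μ > 0 there exists q* ∈ (0,1) such that f(μ, q*) < m(μ). -/
open Topology Filter

noncomputable def fbound (μ q : ℝ) : ℝ :=
  -μ * Real.log q +
    Real.log (1 + (1 / Real.sqrt (2 * Real.exp 1)) * (1 / Real.sqrt (1 - q) - 1))

noncomputable def mbound (μ : ℝ) : ℝ :=
  (μ + 1 / 2) * Real.log (μ + 1 / 2) - μ * Real.log μ - 1 / 2 +
    Real.log (1 + (Real.sqrt (2 * Real.exp 1) - 1) / Real.sqrt (1 + 2 * μ))

noncomputable def gaux (μ r : ℝ) : ℝ :=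
  μ * Real.log (r ^ 2) - μ * Real.log (r ^ 2 - 1) +
    Real.log (Real.sqrt (2 * Real.exp 1) + r - 1)

lemma c_gt_one : 1 < Real.sqrt (2 * Real.exp 1) := by
  rw [Real.lt_sqrt (by norm_num)]
  nlinarith [Real.exp_one_gt_d9]

lemma log_c : Real.log (Real.sqrt (2 * Real.exp 1)) = (Real.log 2 + 1) / 2 := by
  rw [Real.log_sqrt (by positivity), Real.log_mul (by norm_num) (by positivity),
    Real.log_exp]

lemma fbound_eq (μ r : ℝ) (hr : 1 < r) :
    fbound μ (1 - 1 / r ^ 2) = gaux μ r - Real.log (Real.sqrt (2 * Real.exp 1)) := by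
  have hr0 : 0 < r := by linarith
  have hr2 : 1 < r ^ 2 := by nlinarith
  have hc := c_gt_one
  set c := Real.sqrt (2 * Real.exp 1) with hcdef
  have hc0 : 0 < c := by linarith
  have h1 : (1:ℝ) - (1 - 1 / r ^ 2) = 1 / r ^ 2 := by ring
  have h2 : Real.sqrt (1 / r ^ 2) = 1 / r := by
    rw [one_div, one_div, Real.sqrt_inv, Real.sqrt_sq hr0.le]
  have h3 : (1:ℝ) / (1 / r) = r := one_div_one_div r
  have h4 : (1:ℝ) + 1 / c * (r - 1) = (c + r - 1) / c := by
    field_simp; ring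
  have h5 : (1:ℝ) - 1 / r ^ 2 = (r ^ 2 - 1) / r ^ 2 := by
    field_simp
  rw [fbound, h1, h2, h3, h4, h5,
    Real.log_div (by nlinarith) (by positivity),
    Real.log_div (by nlinarith) (by positivity), gaux]
  ring

lemma mbound_eq (μ : ℝ) (hμ : 0 < μ) :
    mbound μ = gaux μ (Real.sqrt (1 + 2 * μ)) - Real.log (Real.sqrt (2 * Real.exp 1)) := by
  have hc := c_gt_one
  set c := Real.sqrt (2 * Real.exp 1) with hcdef
  set s := Real.sqrt (1 + 2 * μ) with hsdef
  have hs2 : s ^ 2 = 1 + 2 * μ := Real.sq_sqrt (by linarith)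
  have hs1 : 1 < s := by
    rw [hsdef, Real.lt_sqrt (by norm_num)]
    linarith
  have hs0 : 0 < s := by linarith
  have hμ2 : μ + 1 / 2 = s ^ 2 / 2 := by rw [hs2]; ring
  have hμ1 : μ = (s ^ 2 - 1) / 2 := by rw [hs2]; ring
  have e1 : Real.log (s ^ 2 / 2) = 2 * Real.log s - Real.log 2 := by
    rw [Real.log_div (by positivity) (by norm_num), Real.log_pow]
    push_cast; ring
  have e2 : Real.log μ = Real.log (s ^ 2 - 1) - Real.log 2 := by
    rw [hμ1, Real.log_div (by nlinarith) (by norm_num)]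
  have e3 : (1:ℝ) + (c - 1) / s = (c + s - 1) / s := by
    field_simp; ring
  have e4 : Real.log ((c + s - 1) / s) = Real.log (c + s - 1) - Real.log s := by
    rw [Real.log_div (by nlinarith) (by positivity)]
  have e5 : Real.log (s ^ 2) = 2 * Real.log s := by
    rw [Real.log_pow]; push_cast; ring
  have hlogc : Real.log c = (Real.log 2 + 1) / 2 := by rw [hcdef]; exact log_c
  rw [mbound, gaux, ← hsdef, ← hcdef, hμ2, e1, e2, e3, e4, e5, hlogc]
  rw [hμ1]
  ring

/-- For every `μ > 0` there exists `q* ∈ (0,1)` such that `f(μ, q*) < m(μ)`. -/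
theorem stmt9 (μ : ℝ) (hμ : 0 < μ) : ∃ q ∈ Set.Ioo (0 : ℝ) 1, fbound μ q < mbound μ := by
  have hc := c_gt_one
  set c := Real.sqrt (2 * Real.exp 1) with hcdef
  set s := Real.sqrt (1 + 2 * μ) with hsdef
  have hs2 : s ^ 2 = 1 + 2 * μ := Real.sq_sqrt (by linarith)
  have hs1 : 1 < s := by
    rw [hsdef, Real.lt_sqrt (by norm_num)]
    linarith
  have hs0 : 0 < s := by linarith
  have hden : 0 < c + s - 1 := by linarith
  -- derivative of gaux μ at s
  have hsq : HasDerivAt (fun r : ℝ => r ^ 2) (2 * s) s := by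
    simpa using hasDerivAt_pow 2 s
  have hsq1 : HasDerivAt (fun r : ℝ => r ^ 2 - 1) (2 * s) s := hsq.sub_const 1
  have hlog1 : HasDerivAt (fun r : ℝ => Real.log (r ^ 2)) ((2 * s) / s ^ 2) s :=
    hsq.log (by positivity)
  have hlog2 : HasDerivAt (fun r : ℝ => Real.log (r ^ 2 - 1)) ((2 * s) / (s ^ 2 - 1)) s :=
    hsq1.log (by nlinarith)
  have hlin : HasDerivAt (fun r : ℝ => c + r - 1) 1 s := by
    simpa using ((hasDerivAt_id s).const_add c).sub_const 1
  have hlog3 : HasDerivAt (fun r : ℝ => Real.log (c + r - 1)) (1 / (c + s - 1)) s :=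
    hlin.log (by linarith)
  have hD : HasDerivAt (gaux μ)
      (μ * ((2 * s) / s ^ 2) - μ * ((2 * s) / (s ^ 2 - 1)) + 1 / (c + s - 1)) s := by
    exact ((hlog1.const_mul μ).sub (hlog2.const_mul μ)).add hlog3
  set D := μ * ((2 * s) / s ^ 2) - μ * ((2 * s) / (s ^ 2 - 1)) + 1 / (c + s - 1) with hDdef
  have hD0 : D < 0 := by
    have h1 : μ * ((2 * s) / s ^ 2) = 2 * μ / s := by
      field_simp
    have h2 : μ * ((2 * s) / (s ^ 2 - 1)) = s := by
      rw [hs2]; field_simp; ring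
    have h3 : 1 / (c + s - 1) < 1 / s := by
      apply one_div_lt_one_div_of_lt hs0; linarith
    have h4 : 2 * μ / s - s = -(1 / s) := by
      field_simp
      nlinarith [hs2]
    rw [hDdef, h1, h2]
    linarith
  -- slope argument
  have hslope := hasDerivAt_iff_tendsto_slope.mp hD
  have hmono : 𝓝[>] s ≤ 𝓝[≠] s :=
    nhdsWithin_mono s (fun x hx => ne_of_gt hx)
  have hev : ∀ᶠ r in 𝓝[>] s, slope (gaux μ) s r < 0 :=
    (hslope.mono_left hmono).eventually_lt_const hD0
  have hev2 : ∀ᶠ r in 𝓝[>] s, s < r := self_mem_nhdsWithin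
  obtain ⟨r, hr1, hr2⟩ := (hev.and hev2).exists
  have hr : 1 < r := lt_trans hs1 hr2
  have hglt : gaux μ r < gaux μ s := by
    have h := hr1
    rw [slope_def_field, div_neg_iff] at h
    rcases h with ⟨hnum, hden'⟩ | ⟨hnum, hden'⟩ <;> linarith
  refine ⟨1 - 1 / r ^ 2, ⟨?_, ?_⟩, ?_⟩
  · have : 1 / r ^ 2 < 1 := by
      rw [div_lt_one (by positivity)]; nlinarith
    linarith
  · have : 0 < 1 / r ^ 2 := by positivity
    linarith
  · rw [fbound_eq μ r hr, mbound_eq μ hμ, ← hsdef, ← hcdef]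
    linarith
end

section
/- For every μ > 0, f(μ, q(μ)) < m(μ), where q(μ) ∈ (0,1) is defined by 1/(1−q(μ)) = 1 + e^{1+γ}·μ + (2−e^{1+γ})·μ²/(1+μ). -/
/-- The explicit choice `q(μ)`, defined by
`1/(1−q(μ)) = 1 + e^{1+γ}·μ + (2−e^{1+γ})·μ²/(1+μ)`. -/
noncomputable def qchoice (μ : ℝ) : ℝ :=
  1 - 1 / (1 + Real.exp (1 + Real.eulerMascheroniConstant) * μ +
    (2 - Real.exp (1 + Real.eulerMascheroniConstant)) * μ ^ 2 / (1 + μ))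


/-- Base case: `exp(2v)(1-v) ≤ 1+v` for `v ∈ [0,1/2]`. -/
lemma aux_exp_base {v : ℝ} (h0 : 0 ≤ v) (h1 : v ≤ 1/2) :
    Real.exp (2*v) * (1 - v) ≤ 1 + v := by
  have hx0 : (0:ℝ) ≤ 2*v := by linarith
  have hx1 : 2*v ≤ 1 := by linarith
  have h := Real.exp_bound' hx0 hx1 (n := 3) (by norm_num)
  have hsum : (∑ m ∈ Finset.range 3, (2*v) ^ m / m.factorial) = 1 + 2*v + 2*v^2 := by
    simp [Finset.sum_range_succ, Nat.factorial]
    ring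
  rw [hsum] at h
  have h' : Real.exp (2*v) ≤ 1 + 2*v + 2*v^2 + (16/9)*v^3 := by
    have heq : (2*v)^3 * (((3:ℕ):ℝ)+1) / (((3:ℕ).factorial : ℝ) * ((3:ℕ):ℝ)) = (16/9)*v^3 := by
      norm_num [Nat.factorial]; ring
    rw [heq] at h; exact h
  nlinarith [pow_nonneg h0 3, pow_nonneg h0 4, Real.exp_pos (2*v)]

/-- `exp(2u)(1-u) ≤ 1+u` for `u ∈ [0,1)`. -/
lemma aux_exp_ratio {u : ℝ} (h0 : 0 ≤ u) (h1 : u < 1) :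
    Real.exp (2*u) * (1 - u) ≤ 1 + u := by
  rcases le_or_gt u (1/2) with h | h
  · exact aux_exp_base h0 h
  · have h2 : 0 ≤ u/2 := by linarith
    have h3 : u/2 ≤ 1/2 := by linarith
    have hb := aux_exp_base h2 h3
    have hu2 : (0:ℝ) < 1 - u/2 := by linarith
    have heq : 2*(u/2) = u := by ring
    rw [heq] at hb
    -- hb : exp u * (1 - u/2) ≤ 1 + u/2
    have he : Real.exp u ≤ (1 + u/2)/(1 - u/2) := by
      rw [le_div_iff₀ hu2]; exact hb
    have hee : Real.exp (2*u) = Real.exp u * Real.exp u := by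
      rw [two_mul, Real.exp_add]
    have hpos := Real.exp_pos u
    have hsq : Real.exp (2*u) ≤ ((1 + u/2)/(1 - u/2))^2 := by
      rw [hee, sq]
      exact mul_le_mul he he hpos.le (by positivity)
    have hfin : ((1 + u/2)/(1 - u/2))^2 * (1 - u) ≤ 1 + u := by
      rw [div_pow, div_mul_eq_mul_div, div_le_iff₀ (by positivity)]
      nlinarith [pow_nonneg h0 3]
    calc Real.exp (2*u) * (1-u) ≤ ((1 + u/2)/(1 - u/2))^2 * (1-u) := by
          apply mul_le_mul_of_nonneg_right hsq (by linarith)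
      _ ≤ 1 + u := hfin

/-- Lower bound `log x − log y ≥ 2(x−y)/(x+y)`. -/
lemma log_diff_ge {x y : ℝ} (hy : 0 < y) (hxy : y ≤ x) :
    2*(x-y)/(x+y) ≤ Real.log x - Real.log y := by
  have hx : 0 < x := lt_of_lt_of_le hy hxy
  have hxy0 : 0 < x + y := by linarith
  set u := (x-y)/(x+y) with hu
  have hu0 : 0 ≤ u := div_nonneg (by linarith) hxy0.le
  have hu1 : u < 1 := (div_lt_one hxy0).2 (by linarith)
  have key := aux_exp_ratio hu0 hu1
  have h1u : 0 < 1 - u := by linarith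
  have hexp : Real.exp (2*u) ≤ (1+u)/(1-u) := by
    rw [le_div_iff₀ h1u]; exact key
  have hratio : (1+u)/(1-u) = x/y := by
    rw [hu]
    rw [div_eq_div_iff (by positivity) hy.ne']
    field_simp
    ring
  have hlog : 2*u ≤ Real.log (x/y) := by
    calc 2*u = Real.log (Real.exp (2*u)) := (Real.log_exp _).symm
      _ ≤ Real.log (x/y) := by
          apply (Real.log_le_log_iff (Real.exp_pos _) (by positivity)).2
          rw [← hratio]; exact hexp
  rw [Real.log_div hx.ne' hy.ne'] at hlog
  calc 2*(x-y)/(x+y) = 2*u := by rw [hu]; ring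
    _ ≤ _ := hlog

/-- Upper bound `log x − log y ≤ (x−y)/y`. -/
lemma log_diff_le {x y : ℝ} (hy : 0 < y) (hxy : y ≤ x) :
    Real.log x - Real.log y ≤ (x-y)/y := by
  have hx : 0 < x := lt_of_lt_of_le hy hxy
  rw [← Real.log_div hx.ne' hy.ne']
  have h := Real.log_le_sub_one_of_pos (div_pos hx hy)
  calc Real.log (x/y) ≤ x/y - 1 := h
    _ = (x-y)/y := by field_simp

lemma hlp_sqrt_lb {T e1 : ℝ} (hT2 : T^2 = 2*e1) (hTpos : 0 < T)
    (he : 2.7182818283 < e1) : 2.331 ≤ T := by nlinarith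

lemma hlp_k {c T : ℝ} (hc : 0 < c) (hT : 2.331 ≤ T) (hcT : c*T = 1) :
    1.331*c ≤ 1 - c := by nlinarith [mul_le_mul_of_nonneg_left hT hc.le]

lemma hlp_c1 {c T : ℝ} (hc : 0 < c) (hT : 2.331 ≤ T) (hcT : c*T = 1) :
    c < 1 := by nlinarith [mul_le_mul_of_nonneg_left hT hc.le]

lemma hlp_t1 {t s : ℝ} (ht2 : t^2 = s) (hs1 : 1 ≤ s) (ht : 0 < t) : 1 ≤ t := by
  nlinarith

lemma hlp_cube {t μ : ℝ} (hμ : 0 < μ) (ht1 : 1 ≤ t) (ht2 : t^2 = 1+2*μ) :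
    3.46*(4*μ+1) ≤ 5.324*(t*(1+μ)) := by
  nlinarith [mul_nonneg (by linarith : (0:ℝ) ≤ t) (sq_nonneg (t - 3/2)),
    sq_nonneg (t - 157/100)]

lemma hlp_Bs1 {c t : ℝ} (hc : 0 < c) (ht : 1 ≤ t) : 1 ≤ 1 - c + c*t := by
  nlinarith [mul_nonneg hc.le (by linarith : (0:ℝ) ≤ t - 1)]

lemma hlp_div (c δ t B : ℝ) (ht : t ≠ 0) (hB : B ≠ 0) :
    (c*(δ/(2*t)))/B = c*δ/(2*t*B) := by
  field_simp

set_option maxHeartbeats 1000000 in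
/-- For every `μ > 0`, `q(μ) ∈ (0,1)` and `f(μ, q(μ)) < m(μ)`. -/
theorem stmt10 (μ : ℝ) (hμ : 0 < μ) :
    qchoice μ ∈ Set.Ioo (0 : ℝ) 1 ∧ fbound μ (qchoice μ) < mbound μ := by
  have hμ1 : (0:ℝ) < 1 + μ := by linarith
  -- numeric facts
  have hexp1_lt : Real.exp 1 < 2.7182818286 := Real.exp_one_lt_d9
  have hexp1_gt : 2.7182818283 < Real.exp 1 := Real.exp_one_gt_d9
  have hγ1 : 1/2 < Real.eulerMascheroniConstant := Real.one_half_lt_eulerMascheroniConstant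
  have hγ2 : Real.eulerMascheroniConstant < 2/3 := Real.eulerMascheroniConstant_lt_two_thirds
  set a := Real.exp (1 + Real.eulerMascheroniConstant) with hadef
  have ha_gt : 2 < a := by
    have h1 : Real.exp 1 ≤ a := by
      rw [hadef]; exact Real.exp_le_exp.2 (by linarith)
    linarith
  have h12 : Real.exp (1/12 : ℝ) < 12/11 := by
    have h := Real.add_one_lt_exp (x := -(1/12:ℝ)) (by norm_num)
    rw [Real.exp_neg] at h
    have hp : (0:ℝ) < Real.exp (1/12 : ℝ) := Real.exp_pos _
    have h2 : (-(1/12:ℝ)+1) * Real.exp (1/12:ℝ) < 1 := by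
      have := mul_lt_mul_of_pos_right h hp
      rwa [inv_mul_cancel₀ hp.ne'] at this
    linarith
  have ha_lt : a < 5.46 := by
    have h1 : a < Real.exp (1 + 2/3 : ℝ) := by
      rw [hadef]; exact Real.exp_lt_exp.2 (by linarith)
    have hsplit : Real.exp (1 + 2/3 : ℝ) = Real.exp 1 * Real.exp (2/3 : ℝ) := by
      rw [← Real.exp_add]
    have h8 : Real.exp (2/3 : ℝ) < (12/11)^8 := by
      rw [show (2/3:ℝ) = ((8:ℕ):ℝ) * (1/12) by norm_num, Real.exp_nat_mul]
      exact pow_lt_pow_left₀ h12 (Real.exp_pos _).le (by norm_num)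
    have hpos : (0:ℝ) < Real.exp (2/3:ℝ) := Real.exp_pos _
    have h9 : Real.exp 1 * Real.exp (2/3:ℝ) < 2.7182818286 * (12/11)^8 :=
      mul_lt_mul' hexp1_lt.le h8 hpos.le (by norm_num)
    have hnum : (2.7182818286 : ℝ) * (12/11)^8 < 5.46 := by norm_num
    linarith
  clear_value a
  set T := Real.sqrt (2 * Real.exp 1) with hTdef
  have hT2 : T^2 = 2 * Real.exp 1 := by
    rw [hTdef]; exact Real.sq_sqrt (by positivity)
  have hTpos : 0 < T := by rw [hTdef]; exact Real.sqrt_pos.2 (by positivity)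
  have hT : 2.331 ≤ T := hlp_sqrt_lb hT2 hTpos hexp1_gt
  clear_value T
  set c := 1 / T with hcdef
  have hc_pos : 0 < c := by rw [hcdef]; positivity
  have hcT : c * T = 1 := by rw [hcdef]; field_simp
  clear_value c
  have hk : 1.331 * c ≤ 1 - c := hlp_k hc_pos hT hcT
  have hc1 : c < 1 := hlp_c1 hc_pos hT hcT
  -- setup
  set s := 1 + 2*μ with hsdef
  have hs0 : (0:ℝ) < s := by rw [hsdef]; linarith
  have hs1 : (1:ℝ) ≤ s := by rw [hsdef]; linarith
  clear_value s
  set δ := (a - 2) * μ / (1 + μ) with hδdef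
  have hδ0 : 0 < δ := by
    rw [hδdef]; exact div_pos (mul_pos (by linarith) hμ) hμ1
  have hδval : δ*(1+μ) = (a-2)*μ := by rw [hδdef]; field_simp
  clear_value δ
  set D := s + δ with hDdef
  set E := 2*μ + δ with hEdef
  clear_value D E
  have hD1 : 1 < D := by rw [hDdef]; rw [hsdef] at *; linarith
  have hD0 : (0:ℝ) < D := by linarith
  have hE0 : (0:ℝ) < E := by rw [hEdef]; linarith
  have hDval : 1 + Real.exp (1 + Real.eulerMascheroniConstant) * μ +
      (2 - Real.exp (1 + Real.eulerMascheroniConstant)) * μ ^ 2 / (1 + μ) = D := by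
    rw [hDdef, hδdef, hsdef, ← hadef]
    field_simp
    ring
  have hq : qchoice μ = 1 - 1/D := by rw [qchoice, hDval]
  -- membership
  have hmem : qchoice μ ∈ Set.Ioo (0:ℝ) 1 := by
    rw [hq]
    constructor
    · have : 1/D < 1 := by rw [div_lt_one hD0]; exact hD1
      linarith
    · have : 0 < 1/D := by positivity
      linarith
  refine ⟨hmem, ?_⟩
  -- sqrt facts
  set t := Real.sqrt s with htdef
  have ht2 : t^2 = s := by rw [htdef]; exact Real.sq_sqrt hs0.le
  have htpos : 0 < t := by rw [htdef]; exact Real.sqrt_pos.2 hs0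
  clear_value t
  have ht1 : 1 ≤ t := hlp_t1 ht2 hs1 htpos
  have ht2' : t^2 = 1 + 2*μ := by rw [ht2, hsdef]
  have hsqD_pos : 0 < Real.sqrt D := Real.sqrt_pos.2 hD0
  have hsqD_ge : t ≤ Real.sqrt D := by
    rw [htdef]; exact Real.sqrt_le_sqrt (by rw [hDdef]; linarith)
  have hsqD_le : Real.sqrt D ≤ t + δ/(2*t) := by
    have hnn : 0 ≤ t + δ/(2*t) := by positivity
    have hexpand : (t + δ/(2*t))^2 = t^2 + δ + δ^2/(4*t^2) := by
      field_simp
      ring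
    have h4 : D ≤ (t + δ/(2*t))^2 := by
      rw [hexpand, ht2, hDdef]
      have h0 : 0 ≤ δ^2/(4*s) := by positivity
      linarith
    calc Real.sqrt D ≤ Real.sqrt ((t + δ/(2*t))^2) := Real.sqrt_le_sqrt h4
      _ = t + δ/(2*t) := Real.sqrt_sq hnn
  -- fbound identity
  have h1mq : 1 - qchoice μ = 1/D := by rw [hq]; ring
  have hD_sub : D - 1 = E := by rw [hDdef, hEdef, hsdef]; ring
  have hqval : qchoice μ = E/D := by
    rw [hq, ← hD_sub, sub_div, div_self hD0.ne']
  have hF : fbound μ (qchoice μ) =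
      μ*(Real.log D - Real.log E) + Real.log (1 - c + c*Real.sqrt D) := by
    rw [fbound, h1mq, hqval, Real.log_div hE0.ne' hD0.ne', ← hTdef, ← hcdef]
    rw [one_div D, Real.sqrt_inv, one_div ((Real.sqrt D)⁻¹), inv_inv]
    rw [show 1 + c * (Real.sqrt D - 1) = 1 - c + c*Real.sqrt D by ring]
    ring
  -- mbound identity
  have hstpos : 0 < t + T - 1 := by linarith
  have hlogT : Real.log T = (Real.log 2 + 1)/2 := by
    rw [hTdef, Real.log_sqrt (by positivity),
      Real.log_mul two_ne_zero (Real.exp_pos 1).ne', Real.log_exp]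
  have hBs : 1 - c + c*t = (t + T - 1)/T := by
    rw [hcdef]; field_simp; ring
  have hM : mbound μ =
      μ*(Real.log s - Real.log (2*μ)) + Real.log (1 - c + c*t) := by
    rw [mbound, ← hTdef, ← hsdef, ← htdef]
    rw [show μ + 1/2 = s/2 by rw [hsdef]; ring]
    rw [Real.log_div hs0.ne' two_ne_zero]
    rw [show 1 + (T - 1)/t = (t + T - 1)/t by field_simp [htpos.ne']; ring]
    rw [Real.log_div hstpos.ne' htpos.ne', htdef, Real.log_sqrt hs0.le, ← htdef]
    rw [hBs, Real.log_div hstpos.ne' hTpos.ne', hlogT,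
      Real.log_mul two_ne_zero hμ.ne', hsdef]
    ring
  rw [hF, hM]
  -- upper bound on log-B difference
  have hBs1 : (1:ℝ) ≤ 1 - c + c*t := hlp_Bs1 hc_pos ht1
  have hBs_pos : (0:ℝ) < 1 - c + c*t := by linarith
  have hBsBD : 1 - c + c*t ≤ 1 - c + c*Real.sqrt D := by
    linarith [mul_le_mul_of_nonneg_left hsqD_ge hc_pos.le]
  have hlogB : Real.log (1 - c + c*Real.sqrt D) - Real.log (1 - c + c*t)
      ≤ c*δ/(2*t*(1 - c + c*t)) := by
    have hd1 := log_diff_le hBs_pos hBsBD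
    have hsub : Real.sqrt D - t ≤ δ/(2*t) := by linarith
    have hd2 : (1 - c + c*Real.sqrt D) - (1 - c + c*t) ≤ c*(δ/(2*t)) := by
      linarith [mul_le_mul_of_nonneg_left hsub hc_pos.le]
    have htne : t ≠ 0 := htpos.ne'
    have hBne : (1 - c + c*t) ≠ 0 := hBs_pos.ne'
    calc Real.log (1 - c + c*Real.sqrt D) - Real.log (1 - c + c*t)
        ≤ ((1 - c + c*Real.sqrt D) - (1 - c + c*t))/(1 - c + c*t) := hd1
      _ ≤ (c*(δ/(2*t)))/(1 - c + c*t) := (div_le_div_iff_of_pos_right hBs_pos).2 hd2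
      _ = c*δ/(2*t*(1 - c + c*t)) := hlp_div c δ t _ htne hBne
  -- lower bound for the log-ratio difference
  have hXY : s*E - 2*μ*D = δ := by rw [hDdef, hEdef, hsdef]; ring
  have hY0 : (0:ℝ) < 2*μ*D := mul_pos (by linarith) hD0
  have hYX : 2*μ*D ≤ s*E := by linarith
  have hlow := log_diff_ge hY0 hYX
  rw [hXY] at hlow
  rw [Real.log_mul hs0.ne' hE0.ne',
    Real.log_mul (by linarith : (0:ℝ) < 2*μ).ne' hD0.ne'] at hlow
  have hsum : s*E + 2*μ*D = 4*μ*s + δ*(4*μ+1) := by rw [hDdef, hEdef, hsdef]; ring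
  -- key numeric inequality
  have hcube : 3.46*(4*μ+1) ≤ 5.324*(t*(1+μ)) := hlp_cube hμ ht1 ht2'
  have hmain : c*δ*(4*μ+1) < 4*μ*t*(1-c) := by
    have e0 : c*δ*(4*μ+1)*(1+μ) = (a-2)*(c*μ*(4*μ+1)) := by
      linear_combination (c*(4*μ+1))*hδval
    have p1 : 0 < c*μ*(4*μ+1) := mul_pos (mul_pos hc_pos hμ) (by linarith)
    have step1 : (a-2)*(c*μ*(4*μ+1)) < 3.46*(c*μ*(4*μ+1)) :=
      mul_lt_mul_of_pos_right (by linarith) p1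
    have step3 : (c*μ)*(3.46*(4*μ+1)) ≤ (c*μ)*(5.324*(t*(1+μ))) :=
      mul_le_mul_of_nonneg_left hcube (le_of_lt (mul_pos hc_pos hμ))
    have p2 : (0:ℝ) ≤ 4*μ*t*(1+μ) :=
      le_of_lt (mul_pos (mul_pos (by linarith) htpos) hμ1)
    have step5 : (4*μ*t*(1+μ))*(1.331*c) ≤ (4*μ*t*(1+μ))*(1-c) :=
      mul_le_mul_of_nonneg_left hk p2
    have h5 : c*δ*(4*μ+1)*(1+μ) < 4*μ*t*(1-c)*(1+μ) := by linarith
    exact lt_of_mul_lt_mul_right h5 hμ1.le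
  have hnum : c*δ/(2*t*(1 - c + c*t)) < μ*(2*δ/(s*E + 2*μ*D)) := by
    rw [hsum]
    have hQ0 : (0:ℝ) < 4*μ*s + δ*(4*μ+1) := by
      have := mul_pos hμ hs0
      have := mul_pos hδ0 (show (0:ℝ) < 4*μ+1 by linarith)
      linarith
    have hden : (0:ℝ) < 2*t*(1 - c + c*t) := mul_pos (by linarith) hBs_pos
    rw [show μ*(2*δ/(4*μ*s + δ*(4*μ+1))) = 2*μ*δ/(4*μ*s + δ*(4*μ+1)) by ring]
    rw [div_lt_div_iff₀ hden hQ0]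
    have hst : s = t^2 := ht2.symm
    rw [hst]
    linarith [mul_lt_mul_of_pos_left hmain hδ0]
  have hμlow : μ*(2*δ/(s*E + 2*μ*D)) ≤
      μ*(Real.log s + Real.log E - (Real.log (2*μ) + Real.log D)) :=
    mul_le_mul_of_nonneg_left hlow hμ.le
  linarith [hlogB, hnum, hμlow]
end

section
/- The expected value of the digamma distribution satisfies E[Y^(q)] = e^{−(1+γ)}·q + o(q) as q → 0⁺; that is, lim_{q→0⁺} ( Σ_{y=1}^∞ y·e^{g(y)}·(q/e)^y / y! ) / ( q·S(q) ) = e^{−(1+γ)}. -/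
namespace DigammaAux

open Real Filter

noncomputable def C : ℝ := Real.exp (1 - Real.eulerMascheroniConstant)

lemma C_pos : 0 < C := Real.exp_pos _

lemma pow_self_le (n : ℕ) : (n : ℝ) ^ n ≤ Real.exp n * n.factorial := by
  have h1 : (n : ℝ) ^ n / n.factorial ≤ Real.exp n := by
    refine le_trans ?_ (Real.sum_le_exp_of_nonneg (x := (n : ℝ)) (by positivity) (n + 1))
    exact Finset.single_le_sum (f := fun i => (n : ℝ) ^ i / i.factorial)
      (fun i _ => by positivity) (Finset.self_mem_range_succ n)
  have hf : (0 : ℝ) < n.factorial := by positivity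
  rw [div_le_iff₀ hf] at h1
  linarith

lemma g_le (y : ℕ) (hy : 1 ≤ y) :
    g y ≤ y * (1 - Real.eulerMascheroniConstant + Real.log y) := by
  have hh : ∑ k ∈ Finset.Icc 1 (y - 1), (1 : ℝ) / k = ((harmonic (y - 1) : ℚ) : ℝ) := by
    rw [harmonic_eq_sum_Icc]
    push_cast
    simp [one_div]
  have h1 : ((harmonic (y - 1) : ℚ) : ℝ) ≤ 1 + Real.log (y - 1 : ℕ) :=
    harmonic_le_one_add_log _
  have hlog : Real.log ((y - 1 : ℕ) : ℝ) ≤ Real.log y := by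
    rcases Nat.eq_zero_or_pos (y - 1) with h | h
    · rw [h]
      simpa using Real.log_nonneg (by exact_mod_cast hy)
    · apply Real.log_le_log (by exact_mod_cast h)
      exact_mod_cast Nat.sub_le y 1
  have hpsi : psi y ≤ 1 - Real.eulerMascheroniConstant + Real.log y := by
    unfold psi
    rw [hh]
    linarith
  unfold g
  exact mul_le_mul_of_nonneg_left hpsi (by positivity)

lemma term_le {q : ℝ} (hq : 0 ≤ q) (y : ℕ) :
    Real.exp (g y) * (q / Real.exp 1) ^ y / Nat.factorial y ≤ (C * q) ^ y := by
  rcases Nat.eq_zero_or_pos y with h | h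
  · subst h; simp [g]
  · have hy0 : (0 : ℝ) < (y : ℝ) := by exact_mod_cast h
    have hexp : Real.exp (g y) ≤ C ^ y * (y : ℝ) ^ y := by
      calc Real.exp (g y) ≤ Real.exp (y * (1 - Real.eulerMascheroniConstant + Real.log y)) :=
            Real.exp_le_exp.2 (g_le y h)
        _ = Real.exp (1 - Real.eulerMascheroniConstant + Real.log y) ^ y :=
            Real.exp_nat_mul _ y
        _ = (C * y) ^ y := by
            rw [Real.exp_add, Real.exp_log hy0]; rfl
        _ = C ^ y * (y : ℝ) ^ y := mul_pow _ _ _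
    have hself : (y : ℝ) ^ y ≤ Real.exp 1 ^ y * y.factorial := by
      have h1 := pow_self_le y
      have h2 : Real.exp (y : ℝ) = Real.exp 1 ^ y := by
        rw [← Real.exp_nat_mul, mul_one]
      rw [h2] at h1
      exact h1
    have hfac : (0 : ℝ) < (y.factorial : ℝ) := by positivity
    have hqpow : (0 : ℝ) ≤ q ^ y := by positivity
    have hmain : Real.exp (g y) * q ^ y ≤ (C * q) ^ y * (Real.exp 1 ^ y * y.factorial) := by
      calc Real.exp (g y) * q ^ y ≤ (C ^ y * ((y : ℝ)) ^ y) * q ^ y :=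
            mul_le_mul_of_nonneg_right hexp hqpow
        _ ≤ (C ^ y * (Real.exp 1 ^ y * y.factorial)) * q ^ y := by
            apply mul_le_mul_of_nonneg_right _ hqpow
            exact mul_le_mul_of_nonneg_left hself (pow_nonneg C_pos.le y)
        _ = (C * q) ^ y * (Real.exp 1 ^ y * y.factorial) := by ring
    calc Real.exp (g y) * (q / Real.exp 1) ^ y / y.factorial
        = Real.exp (g y) * q ^ y / (Real.exp 1 ^ y * y.factorial) := by
          rw [div_pow]; ring
      _ ≤ (C * q) ^ y := by
          rw [div_le_iff₀ (by positivity)]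
          linarith

lemma term_nonneg {q : ℝ} (hq : 0 ≤ q) (y : ℕ) :
    0 ≤ Real.exp (g y) * (q / Real.exp 1) ^ y / Nat.factorial y := by positivity

lemma nterm_le {q : ℝ} (hq : 0 ≤ q) (y : ℕ) :
    (y : ℝ) * Real.exp (g y) * (q / Real.exp 1) ^ y / Nat.factorial y ≤ (2 * (C * q)) ^ y := by
  have h1 : (y : ℝ) * Real.exp (g y) * (q / Real.exp 1) ^ y / Nat.factorial y
      = (y : ℝ) * (Real.exp (g y) * (q / Real.exp 1) ^ y / Nat.factorial y) := by ring
  have h2 : (y : ℝ) ≤ 2 ^ y := by exact_mod_cast (Nat.lt_two_pow_self : y < 2 ^ y).le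
  rw [h1, mul_pow]
  calc (y : ℝ) * (Real.exp (g y) * (q / Real.exp 1) ^ y / Nat.factorial y)
      ≤ (y : ℝ) * (C * q) ^ y :=
        mul_le_mul_of_nonneg_left (term_le hq y) (Nat.cast_nonneg y)
    _ ≤ 2 ^ y * (C * q) ^ y := mul_le_mul_of_nonneg_right h2 (pow_nonneg (mul_nonneg C_pos.le hq) y)

lemma nterm_nonneg {q : ℝ} (hq : 0 ≤ q) (y : ℕ) :
    0 ≤ (y : ℝ) * Real.exp (g y) * (q / Real.exp 1) ^ y / Nat.factorial y := by positivity

end DigammaAux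

/-- The expected value of the digamma distribution satisfies
`E[Y^(q)] = e^{−(1+γ)}·q + o(q)` as `q → 0⁺`, i.e.
`(Σ_{y≥1} y·e^{g(y)}·(q/e)^y / y!) / (q·S(q)) → e^{−(1+γ)}` as `q → 0⁺`. -/
theorem stmt11 :
    Filter.Tendsto
      (fun q : ℝ =>
        (∑' y : ℕ, (y : ℝ) * Real.exp (g y) * (q / Real.exp 1) ^ y / Nat.factorial y) /
          (q * S q))
      (nhdsWithin 0 (Set.Ioi 0))
      (nhds (Real.exp (-(1 + Real.eulerMascheroniConstant)))) := by
  classical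
  open DigammaAux Real Filter in
  set γ := Real.eulerMascheroniConstant with hγ
  set L : ℝ := Real.exp (-(1 + γ)) with hLdef
  have hC := C_pos
  have hLpos : 0 < L := Real.exp_pos _
  set δ : ℝ := 1 / (4 * C) with hδdef
  have hδpos : 0 < δ := by rw [hδdef]; exact div_pos one_pos (by linarith)
  -- main bounds on the ratio for q ∈ (0, δ)
  have key : ∀ q : ℝ, 0 < q → q < δ →
      L / (1 + 2 * (C * q)) ≤
        (∑' y : ℕ, (y : ℝ) * Real.exp (g y) * (q / Real.exp 1) ^ y / Nat.factorial y) /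
          (q * S q) ∧
      (∑' y : ℕ, (y : ℝ) * Real.exp (g y) * (q / Real.exp 1) ^ y / Nat.factorial y) /
          (q * S q) ≤ L + 8 * C ^ 2 * q := by
    intro q hq hqδ
    have hq' : 0 ≤ q := hq.le
    have hCq : C * q < 1 / 4 := by
      rw [hδdef, lt_div_iff₀ (by positivity)] at hqδ
      linarith
    have hCq0 : 0 ≤ C * q := mul_nonneg hC.le hq'
    have h2Cq : 2 * (C * q) < 1 / 2 := by linarith
    have h2Cq0 : 0 ≤ 2 * (C * q) := by linarith
    set fS : ℕ → ℝ := fun y => Real.exp (g y) * (q / Real.exp 1) ^ y / Nat.factorial y with hfS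
    set fN : ℕ → ℝ := fun y =>
      (y : ℝ) * Real.exp (g y) * (q / Real.exp 1) ^ y / Nat.factorial y with hfN
    have hsumS : Summable fS :=
      Summable.of_nonneg_of_le (term_nonneg hq') (term_le hq')
        (summable_geometric_of_lt_one hCq0 (by linarith))
    have hsumN : Summable fN :=
      Summable.of_nonneg_of_le (nterm_nonneg hq') (nterm_le hq')
        (summable_geometric_of_lt_one h2Cq0 (by linarith))
    have hsumGeo : Summable (fun n : ℕ => (C * q) ^ n) :=
      summable_geometric_of_lt_one hCq0 (by linarith)
    have hsumGeo2 : Summable (fun n : ℕ => (2 * (C * q)) ^ n) :=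
      summable_geometric_of_lt_one h2Cq0 (by linarith)
    -- S q bounds
    have hfS0 : fS 0 = 1 := by simp [hfS, g]
    have hS1 : 1 ≤ S q := by
      have := Summable.le_tsum hsumS 0 (fun j _ => term_nonneg hq' j)
      rw [hfS0] at this
      exact this
    have hSub : S q ≤ 1 + 2 * (C * q) := by
      have hsplit : S q = fS 0 + ∑' n : ℕ, fS (n + 1) := Summable.tsum_eq_zero_add hsumS
      have htail : ∑' n : ℕ, fS (n + 1) ≤ ∑' n : ℕ, (C * q) ^ (n + 1) :=
        Summable.tsum_le_tsum (fun n => term_le hq' (n + 1))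
          ((summable_nat_add_iff 1).2 hsumS) ((summable_nat_add_iff 1).2 hsumGeo)
      have hgeo : ∑' n : ℕ, (C * q) ^ (n + 1) = (C * q) * (1 - C * q)⁻¹ := by
        simp_rw [pow_succ']
        rw [tsum_mul_left, tsum_geometric_of_lt_one hCq0 (by linarith)]
      have hinv : (1 - C * q)⁻¹ ≤ 2 := by
        rw [inv_le_comm₀ (by linarith) (by norm_num)]
        linarith
      have : (C * q) * (1 - C * q)⁻¹ ≤ 2 * (C * q) := by
        calc (C * q) * (1 - C * q)⁻¹ ≤ (C * q) * 2 :=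
              mul_le_mul_of_nonneg_left hinv hCq0
          _ = 2 * (C * q) := by ring
      rw [hsplit, hfS0]
      rw [hgeo] at htail
      linarith
    -- numerator bounds
    have hfN0 : fN 0 = 0 := by simp [hfN]
    have hg1 : g 1 = -γ := by
      simp [g, psi, hγ]
    have hfN1 : fN 1 = L * q := by
      have hL : L = Real.exp (-γ) / Real.exp 1 := by
        rw [hLdef, ← Real.exp_sub]
        congr 1
        ring
      simp only [hfN, Nat.cast_one, one_mul, pow_one, Nat.factorial_one, Nat.cast_one, div_one,
        hg1, hL]
      ring
    set N : ℝ := ∑' y : ℕ, fN y with hN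
    have hNlow : L * q ≤ N := by
      have := Summable.le_tsum hsumN 1 (fun j _ => nterm_nonneg hq' j)
      rw [hfN1] at this
      exact this
    have hNup : N ≤ L * q + 8 * C ^ 2 * q ^ 2 := by
      have hsplit1 : N = fN 0 + ∑' n : ℕ, fN (n + 1) := Summable.tsum_eq_zero_add hsumN
      have hsum1 : Summable (fun n : ℕ => fN (n + 1)) := (summable_nat_add_iff 1).2 hsumN
      have hsplit2 : ∑' n : ℕ, fN (n + 1) = fN 1 + ∑' n : ℕ, fN (n + 2) :=
        Summable.tsum_eq_zero_add hsum1
      have htail : ∑' n : ℕ, fN (n + 2) ≤ ∑' n : ℕ, (2 * (C * q)) ^ (n + 2) :=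
        Summable.tsum_le_tsum (fun n => nterm_le hq' (n + 2))
          ((summable_nat_add_iff 2).2 hsumN) ((summable_nat_add_iff 2).2 hsumGeo2)
      have hgeo : ∑' n : ℕ, (2 * (C * q)) ^ (n + 2)
          = (1 - 2 * (C * q))⁻¹ * (2 * (C * q)) ^ 2 := by
        simp_rw [pow_add]
        rw [tsum_mul_right, tsum_geometric_of_lt_one h2Cq0 (by linarith)]
      have hinv : (1 - 2 * (C * q))⁻¹ ≤ 2 := by
        rw [inv_le_comm₀ (by linarith) (by norm_num)]
        linarith
      have htail2 : ∑' n : ℕ, fN (n + 2) ≤ 8 * C ^ 2 * q ^ 2 := by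
        have h1 : (1 - 2 * (C * q))⁻¹ * (2 * (C * q)) ^ 2 ≤ 2 * (2 * (C * q)) ^ 2 :=
          mul_le_mul_of_nonneg_right hinv (by positivity)
        have h2 : 2 * (2 * (C * q)) ^ 2 = 8 * C ^ 2 * q ^ 2 := by ring
        rw [hgeo] at htail
        linarith
      rw [hsplit1, hfN0, hsplit2, hfN1]
      linarith
    have hNnonneg : 0 ≤ N := tsum_nonneg (nterm_nonneg hq')
    have hqS : 0 < q * S q := mul_pos hq (by linarith)
    constructor
    · have h1 : L / (1 + 2 * (C * q)) = (L * q) / (q * (1 + 2 * (C * q))) := by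
        rw [mul_comm q (1 + 2 * (C * q)), mul_div_mul_right _ _ (ne_of_gt hq)]
      rw [h1]
      apply div_le_div₀ hNnonneg hNlow hqS
      exact mul_le_mul_of_nonneg_left hSub hq'
    · have h2 : (L * q + 8 * C ^ 2 * q ^ 2) / q = L + 8 * C ^ 2 * q := by
        field_simp
      calc N / (q * S q) ≤ (L * q + 8 * C ^ 2 * q ^ 2) / q := by
            apply div_le_div₀ (add_nonneg (mul_nonneg hLpos.le hq')
              (mul_nonneg (mul_nonneg (by norm_num) (sq_nonneg C)) (sq_nonneg q))) hNup hq
            calc q = q * 1 := (mul_one q).symm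
              _ ≤ q * S q := mul_le_mul_of_nonneg_left hS1 hq'
        _ = L + 8 * C ^ 2 * q := h2
  -- squeeze
  have hmem : Set.Ioo (0 : ℝ) δ ∈ nhdsWithin (0 : ℝ) (Set.Ioi 0) :=
    Ioo_mem_nhdsGT_of_mem ⟨le_refl 0, hδpos⟩
  have hlow : Filter.Tendsto (fun q : ℝ => L / (1 + 2 * (C * q)))
      (nhdsWithin 0 (Set.Ioi 0)) (nhds L) := by
    have hc : ContinuousAt (fun q : ℝ => L / (1 + 2 * (C * q))) 0 := by
      apply ContinuousAt.div continuousAt_const (by fun_prop)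
      norm_num
    have := hc.tendsto.mono_left
      (nhdsWithin_le_nhds : nhdsWithin (0:ℝ) (Set.Ioi 0) ≤ nhds 0)
    simpa using this
  have hup : Filter.Tendsto (fun q : ℝ => L + 8 * C ^ 2 * q)
      (nhdsWithin 0 (Set.Ioi 0)) (nhds L) := by
    have hc : ContinuousAt (fun q : ℝ => L + 8 * C ^ 2 * q) 0 := by fun_prop
    have := hc.tendsto.mono_left
      (nhdsWithin_le_nhds : nhdsWithin (0:ℝ) (Set.Ioi 0) ≤ nhds 0)
    simpa using this
  refine tendsto_of_tendsto_of_tendsto_of_le_of_le' hlow hup ?_ ?_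
  · exact Filter.eventually_of_mem hmem (fun q hq => (key q hq.1 hq.2).1)
  · exact Filter.eventually_of_mem hmem (fun q hq => (key q hq.1 hq.2).2)
end
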